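/- A vector v ∈ ℝ⁵ with all entries nonnegative satisfies vᵀHv = 0 if and only if v lies in the union of cones ⋃_{i=1}^{5} cone(e_i+e_{i+1}, e_{i+1}+e_{i+2}) with indices taken modulo 5; that is, if and only if there exist an index i ∈ {1,…,5} and nonnegative reals a, b such that v = a(e_i+e_{i+1}) + b(e_{i+1}+e_{i+2}), where e₁,…,e₅ is the standard basis of ℝ⁵ and e₆ = e₁, e₇ = e₂. -/
import Mathlib


open Matrix

/-- The Horn matrix. -/
def Horn : Matrix (Fin 5) (Fin 5) ℝ :=
  !![1, -1,  1,  1, -1;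
    -1,  1, -1,  1,  1;
     1, -1,  1, -1,  1;
     1,  1, -1,  1, -1;
    -1,  1,  1, -1,  1]

/-- The standard basis vector `e i` of `ℝ⁵`. -/
def e (i : Fin 5) : Fin 5 → ℝ := Pi.single i 1

private lemma hornMid (x0 x1 x2 x3 x4 : ℝ)
    (hq : x0*(x0-x1+x2+x3-x4)+x1*(-x0+x1-x2+x3+x4)+x2*(x0-x1+x2-x3+x4)
      +x3*(x0+x1-x2+x3-x4)+x4*(-x0+x1+x2-x3+x4) = 0)
    (h0 : x0 = 0) (h1 : x1 = 0) : x3 = x2 + x4 := by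
  subst h0 h1
  have h : (x2 - x3 + x4) ^ 2 = 0 := by linear_combination hq
  have := pow_eq_zero_iff (n := 2) (by norm_num) |>.mp h
  linarith

private lemma hornAdj (x0 x1 x2 x3 x4 : ℝ)
    (h0 : 0 ≤ x0) (h1 : 0 ≤ x1) (h2 : 0 ≤ x2) (h3 : 0 ≤ x3) (h4 : 0 ≤ x4)
    (h12 : x2 ≤ x1)
    (hq : x0*(x0-x1+x2+x3-x4)+x1*(-x0+x1-x2+x3+x4)+x2*(x0-x1+x2-x3+x4)
      +x3*(x0+x1-x2+x3-x4)+x4*(-x0+x1+x2-x3+x4) = 0) :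
    (x0=0∧x1=0)∨(x1=0∧x2=0)∨(x2=0∧x3=0)∨(x3=0∧x4=0)∨(x4=0∧x0=0) := by
  have e1 : x2 * x4 = 0 := le_antisymm
    (by nlinarith [sq_nonneg (x0-x1+x2+x3-x4), mul_nonneg h3 (sub_nonneg.2 h12)])
    (mul_nonneg h2 h4)
  have e2 : x3 * (x1 - x2) = 0 := le_antisymm
    (by nlinarith [sq_nonneg (x0-x1+x2+x3-x4), mul_nonneg h2 h4])
    (mul_nonneg h3 (sub_nonneg.2 h12))
  have e3 : x0 - x1 + x2 + x3 - x4 = 0 := by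
    have hsq : (x0-x1+x2+x3-x4)^2 = 0 := le_antisymm
      (by nlinarith [mul_nonneg h2 h4, mul_nonneg h3 (sub_nonneg.2 h12)])
      (sq_nonneg _)
    exact pow_eq_zero_iff (n := 2) (by norm_num) |>.mp hsq
  rcases mul_eq_zero.mp e1 with hc | hc
  · have e2' : x3 * x1 = 0 := by rw [hc] at e2; linarith [e2]
    rcases mul_eq_zero.mp e2' with hd | hd
    · exact Or.inr (Or.inr (Or.inl ⟨hc, hd⟩))
    · exact Or.inr (Or.inl ⟨hd, hc⟩)
  · rcases mul_eq_zero.mp e2 with hd | hd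
    · exact Or.inr (Or.inr (Or.inr (Or.inl ⟨hd, hc⟩)))
    · have hx12 : x1 = x2 := by linarith
      have hx0 : x0 = 0 := by linarith
      exact Or.inr (Or.inr (Or.inr (Or.inr ⟨hc, hx0⟩)))

private lemma hornKey (x0 x1 x2 x3 x4 : ℝ)
    (h0 : 0 ≤ x0) (h1 : 0 ≤ x1) (h2 : 0 ≤ x2) (h3 : 0 ≤ x3) (h4 : 0 ≤ x4)
    (hq : x0*(x0-x1+x2+x3-x4)+x1*(-x0+x1-x2+x3+x4)+x2*(x0-x1+x2-x3+x4)
      +x3*(x0+x1-x2+x3-x4)+x4*(-x0+x1+x2-x3+x4) = 0) :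
    (x3=0∧x4=0∧x1=x0+x2) ∨ (x4=0∧x0=0∧x2=x1+x3) ∨ (x0=0∧x1=0∧x3=x2+x4) ∨
    (x1=0∧x2=0∧x4=x3+x0) ∨ (x2=0∧x3=0∧x0=x4+x1) := by
  have hq1 : x1*(x1-x2+x3+x4-x0)+x2*(-x1+x2-x3+x4+x0)+x3*(x1-x2+x3-x4+x0)
      +x4*(x1+x2-x3+x4-x0)+x0*(-x1+x2+x3-x4+x0) = 0 := by linear_combination hq
  have hq2 : x2*(x2-x3+x4+x0-x1)+x3*(-x2+x3-x4+x0+x1)+x4*(x2-x3+x4-x0+x1)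
      +x0*(x2+x3-x4+x0-x1)+x1*(-x2+x3+x4-x0+x1) = 0 := by linear_combination hq
  have hq3 : x3*(x3-x4+x0+x1-x2)+x4*(-x3+x4-x0+x1+x2)+x0*(x3-x4+x0-x1+x2)
      +x1*(x3+x4-x0+x1-x2)+x2*(-x3+x4+x0-x1+x2) = 0 := by linear_combination hq
  have hq4 : x4*(x4-x0+x1+x2-x3)+x0*(-x4+x0-x1+x2+x3)+x1*(x4-x0+x1-x2+x3)
      +x2*(x4+x0-x1+x2-x3)+x3*(-x4+x0+x1-x2+x3) = 0 := by linear_combination hq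
  have hp : (x0=0∧x1=0)∨(x1=0∧x2=0)∨(x2=0∧x3=0)∨(x3=0∧x4=0)∨(x4=0∧x0=0) := by
    rcases le_total x2 x1 with h | h
    · exact hornAdj x0 x1 x2 x3 x4 h0 h1 h2 h3 h4 h hq
    rcases le_total x3 x2 with h' | h'
    · have := hornAdj x1 x2 x3 x4 x0 h1 h2 h3 h4 h0 h' hq1; tauto
    rcases le_total x4 x3 with h'' | h''
    · have := hornAdj x2 x3 x4 x0 x1 h2 h3 h4 h0 h1 h'' hq2; tauto
    rcases le_total x0 x4 with h''' | h'''
    · have := hornAdj x3 x4 x0 x1 x2 h3 h4 h0 h1 h2 h''' hq3; tauto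
    · have hx : x1 ≤ x0 := by linarith
      have := hornAdj x4 x0 x1 x2 x3 h4 h0 h1 h2 h3 hx hq4; tauto
  rcases hp with ⟨ha, hb⟩ | ⟨ha, hb⟩ | ⟨ha, hb⟩ | ⟨ha, hb⟩ | ⟨ha, hb⟩
  · exact Or.inr (Or.inr (Or.inl ⟨ha, hb, hornMid x0 x1 x2 x3 x4 hq ha hb⟩))
  · exact Or.inr (Or.inr (Or.inr (Or.inl ⟨ha, hb, hornMid x1 x2 x3 x4 x0 hq1 ha hb⟩)))
  · exact Or.inr (Or.inr (Or.inr (Or.inr ⟨ha, hb, hornMid x2 x3 x4 x0 x1 hq2 ha hb⟩)))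
  · exact Or.inl ⟨ha, hb, hornMid x3 x4 x0 x1 x2 hq3 ha hb⟩
  · exact Or.inr (Or.inl ⟨ha, hb, hornMid x4 x0 x1 x2 x3 hq4 ha hb⟩)

/-- the nonnegative zeros of the Horn quadratic form are exactly the union of
the cones `cone(eᵢ+eᵢ₊₁, eᵢ₊₁+eᵢ₊₂)`, indices mod 5. -/
theorem horn_zeros (v : Fin 5 → ℝ) (hv : ∀ i, 0 ≤ v i) :
    v ⬝ᵥ Horn.mulVec v = 0 ↔
      ∃ (i : Fin 5) (a b : ℝ), 0 ≤ a ∧ 0 ≤ b ∧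
        v = a • (e i + e (i + 1)) + b • (e (i + 1) + e (i + 2)) := by
  constructor
  · intro h
    simp [Horn, dotProduct, mulVec, Fin.sum_univ_five, Matrix.vecHead, Matrix.vecTail] at h
    have hq : v 0*(v 0-v 1+v 2+v 3-v 4)+v 1*(-v 0+v 1-v 2+v 3+v 4)+v 2*(v 0-v 1+v 2-v 3+v 4)
        +v 3*(v 0+v 1-v 2+v 3-v 4)+v 4*(-v 0+v 1+v 2-v 3+v 4) = 0 := by
      linear_combination h
    rcases hornKey (v 0) (v 1) (v 2) (v 3) (v 4) (hv 0) (hv 1) (hv 2) (hv 3) (hv 4) hq with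
      ⟨ha, hb, hc⟩ | ⟨ha, hb, hc⟩ | ⟨ha, hb, hc⟩ | ⟨ha, hb, hc⟩ | ⟨ha, hb, hc⟩
    · exact ⟨0, v 0, v 2, hv 0, hv 2, by
        funext j; fin_cases j <;> simp [e, Pi.single_apply] <;> linarith⟩
    · exact ⟨1, v 1, v 3, hv 1, hv 3, by
        funext j; fin_cases j <;> simp [e, Pi.single_apply] <;> linarith⟩
    · exact ⟨2, v 2, v 4, hv 2, hv 4, by
        funext j; fin_cases j <;> simp [e, Pi.single_apply] <;> linarith⟩
    · exact ⟨3, v 3, v 0, hv 3, hv 0, by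
        funext j; fin_cases j <;> simp [e, Pi.single_apply] <;> linarith⟩
    · exact ⟨4, v 4, v 1, hv 4, hv 1, by
        funext j; fin_cases j <;> simp [e, Pi.single_apply] <;> linarith⟩
  · rintro ⟨i, a, b, ha, hb, rfl⟩
    fin_cases i <;>
      simp [Horn, dotProduct, mulVec, Fin.sum_univ_five, Matrix.vecHead, Matrix.vecTail,
        e, Pi.single_apply] <;> ring
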